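/- There exists a unique pair (u*, w*) ∈ Δ(A) × Δ(B) that is a saddle point of H, i.e. H(u*, w) ≤ H(u*, w*) ≤ H(u, w*) for all u ∈ Δ(A) and w ∈ Δ(B); moreover H(u*, w*) = ⨅_{u ∈ Δ(A)} ⨆_{w ∈ Δ(B)} H(u,w) = ⨆_{w ∈ Δ(B)} ⨅_{u ∈ Δ(A)} H(u,w). -/

import Mathlib

open scoped BigOperators

noncomputable section

lemma myStrongConvexOn_add_linear {E : Type*} [NormedAddCommGroup E] [NormedSpace ℝ E]
    {s : Set E} {μ : ℝ} {f g : E → ℝ} (hg : IsLinearMap ℝ g) (hf : StrongConvexOn s μ f) :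
    StrongConvexOn s μ (fun x => g x + f x) := by
  refine ⟨hf.1, fun x hx y hy a b ha hb hab => ?_⟩
  have h1 := hf.2 hx hy ha hb hab
  have h2 : g (a • x + b • y) = a * g x + b * g y := by
    rw [hg.map_add, hg.map_smul, hg.map_smul]; simp [smul_eq_mul]
  simp only [smul_eq_mul] at h1 ⊢
  rw [h2]; linarith

lemma myStrongConcaveOn_add_linear {E : Type*} [NormedAddCommGroup E] [NormedSpace ℝ E]
    {s : Set E} {μ : ℝ} {f g : E → ℝ} (hg : IsLinearMap ℝ g) (hf : StrongConcaveOn s μ f) :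
    StrongConcaveOn s μ (fun x => g x + f x) := by
  refine ⟨hf.1, fun x hx y hy a b ha hb hab => ?_⟩
  have h1 := hf.2 hx hy ha hb hab
  have h2 : g (a • x + b • y) = a * g x + b * g y := by
    rw [hg.map_add, hg.map_smul, hg.map_smul]; simp [smul_eq_mul]
  simp only [smul_eq_mul] at h1 ⊢
  rw [h2]; linarith

lemma mySqBound {E : Type*} [NormedAddCommGroup E] [NormedSpace ℝ E]
    {s : Set E} {μ : ℝ} {f : E → ℝ} (hf : StrongConcaveOn s μ f)
    {x y : E} (hx : IsMaxOn f s x) (hxs : x ∈ s) (hys : y ∈ s) :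
    μ * ‖y - x‖ ^ 2 ≤ 4 * (f x - f y) := by
  have h1 := hf.2 hys hxs (by norm_num : (0:ℝ) ≤ 1/2) (by norm_num : (0:ℝ) ≤ 1/2) (by norm_num)
  have hmem : (1/2 : ℝ) • y + (1/2 : ℝ) • x ∈ s :=
    hf.1 hys hxs (by norm_num) (by norm_num) (by norm_num)
  have h2 : f ((1/2 : ℝ) • y + (1/2 : ℝ) • x) ≤ f x := hx hmem
  simp only [smul_eq_mul] at h1
  nlinarith [h1, h2]

theorem unique_saddle_point_of_regularized_matrix_game
    {A B : Type*} [Fintype A] [Fintype B] [Nonempty A] [Nonempty B]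
    (Q : A → B → ℝ) (h : (A → ℝ) → (B → ℝ) → ℝ)
    (hcont : Continuous (fun p : (A → ℝ) × (B → ℝ) => h p.1 p.2))
    (μ₁ μ₂ : ℝ) (hμ₁ : 0 < μ₁) (hμ₂ : 0 < μ₂)
    (hconv : ∀ w ∈ stdSimplex ℝ B,
      StrongConvexOn (stdSimplex ℝ A) μ₁ (fun u => h u w))
    (hconc : ∀ u ∈ stdSimplex ℝ A,
      StrongConcaveOn (stdSimplex ℝ B) μ₂ (fun w => h u w))
    (H : (A → ℝ) → (B → ℝ) → ℝ)
    (hH : ∀ u w, H u w = (∑ a, ∑ b, u a * w b * Q a b) + h u w) :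
    (∃! p : stdSimplex ℝ A × stdSimplex ℝ B,
      ∀ (u : stdSimplex ℝ A) (w : stdSimplex ℝ B),
        H p.1.1 w.1 ≤ H p.1.1 p.2.1 ∧ H p.1.1 p.2.1 ≤ H u.1 p.2.1) ∧
    (∀ p : stdSimplex ℝ A × stdSimplex ℝ B,
      (∀ (u : stdSimplex ℝ A) (w : stdSimplex ℝ B),
        H p.1.1 w.1 ≤ H p.1.1 p.2.1 ∧ H p.1.1 p.2.1 ≤ H u.1 p.2.1) →
      H p.1.1 p.2.1 = (⨅ u : stdSimplex ℝ A, ⨆ w : stdSimplex ℝ B, H u.1 w.1) ∧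
      H p.1.1 p.2.1 = (⨆ w : stdSimplex ℝ B, ⨅ u : stdSimplex ℝ A, H u.1 w.1)) := by
  classical
  have neA : (stdSimplex ℝ A).Nonempty :=
    ⟨_, ite_eq_mem_stdSimplex ℝ (Classical.arbitrary A)⟩
  have neB : (stdSimplex ℝ B).Nonempty :=
    ⟨_, ite_eq_mem_stdSimplex ℝ (Classical.arbitrary B)⟩
  have cA : IsCompact (stdSimplex ℝ A) := isCompact_stdSimplex ℝ A
  have cB : IsCompact (stdSimplex ℝ B) := isCompact_stdSimplex ℝ B
  haveI : Nonempty (stdSimplex ℝ A) := neA.to_subtype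
  haveI : Nonempty (stdSimplex ℝ B) := neB.to_subtype
  -- continuity of H
  have HC : Continuous (fun p : (A → ℝ) × (B → ℝ) => H p.1 p.2) := by
    have hrw : (fun p : (A → ℝ) × (B → ℝ) => H p.1 p.2)
        = fun p => (∑ a, ∑ b, p.1 a * p.2 b * Q a b) + h p.1 p.2 := by
      funext p; exact hH p.1 p.2
    rw [hrw]
    refine Continuous.add ?_ hcont
    refine continuous_finset_sum _ fun a _ => continuous_finset_sum _ fun b _ => ?_
    exact (((continuous_apply a).comp continuous_fst).mul
      ((continuous_apply b).comp continuous_snd)).mul continuous_const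
  have HCu : ∀ u, Continuous fun w => H u w := fun u =>
    HC.comp (continuous_const.prodMk continuous_id)
  have HCw : ∀ w, Continuous fun u => H u w := fun w =>
    HC.comp (continuous_id.prodMk continuous_const)
  -- linearity of the bilinear part
  have linA : ∀ w : B → ℝ, IsLinearMap ℝ (fun u : A → ℝ => ∑ a, ∑ b, u a * w b * Q a b) := by
    intro w
    constructor
    · intro u v; simp [add_mul, Finset.sum_add_distrib]
    · intro c u; simp [Finset.mul_sum, mul_assoc]
  have linB : ∀ u : A → ℝ, IsLinearMap ℝ (fun w : B → ℝ => ∑ a, ∑ b, u a * w b * Q a b) := by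
    intro u
    constructor
    · intro v v'
      simp only [Pi.add_apply, mul_add, add_mul, Finset.sum_add_distrib]
    · intro c v
      simp only [Pi.smul_apply, smul_eq_mul, Finset.mul_sum]
      congr 1; funext a; congr 1; funext b; ring
  -- convexity/concavity of slices of H
  have Hconv : ∀ w ∈ stdSimplex ℝ B, StrongConvexOn (stdSimplex ℝ A) μ₁ (fun u => H u w) := by
    intro w hw
    have hrw : (fun u => H u w) = fun u => (∑ a, ∑ b, u a * w b * Q a b) + h u w :=
      funext fun u => hH u w
    rw [hrw]
    exact myStrongConvexOn_add_linear (linA w) (hconv w hw)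
  have Hconc : ∀ u ∈ stdSimplex ℝ A, StrongConcaveOn (stdSimplex ℝ B) μ₂ (fun w => H u w) := by
    intro u hu
    have hrw : (fun w => H u w) = fun w => (∑ a, ∑ b, u a * w b * Q a b) + h u w :=
      funext fun w => hH u w
    rw [hrw]
    exact myStrongConcaveOn_add_linear (linB u) (hconc u hu)
  -- the value function φ
  set φ : (A → ℝ) → ℝ := fun u => sSup ((fun w => H u w) '' stdSimplex ℝ B) with hφdef
  have φbdd : ∀ u, BddAbove ((fun w => H u w) '' stdSimplex ℝ B) := fun u =>
    (cB.image_of_continuousOn (HCu u).continuousOn).bddAbove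
  have φle : ∀ u, ∀ w ∈ stdSimplex ℝ B, H u w ≤ φ u := fun u w hw =>
    le_csSup (φbdd u) ⟨w, hw, rfl⟩
  have φle' : ∀ u c, (∀ w ∈ stdSimplex ℝ B, H u w ≤ c) → φ u ≤ c := fun u c hc =>
    csSup_le (neB.image _) (by rintro x ⟨w, hw, rfl⟩; exact hc w hw)
  -- uniform continuity of H on the product
  have key : ∀ ε > (0:ℝ), ∃ δ > (0:ℝ), ∀ u ∈ stdSimplex ℝ A, ∀ w ∈ stdSimplex ℝ B,
      ∀ u' ∈ stdSimplex ℝ A, ∀ w' ∈ stdSimplex ℝ B,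
      dist u u' < δ → dist w w' < δ → |H u w - H u' w'| < ε := by
    intro ε hε
    have ucH : UniformContinuousOn (fun p : (A → ℝ) × (B → ℝ) => H p.1 p.2)
        ((stdSimplex ℝ A) ×ˢ (stdSimplex ℝ B)) :=
      (cA.prod cB).uniformContinuousOn_of_continuous HC.continuousOn
    obtain ⟨δ, hδ, hd⟩ := Metric.uniformContinuousOn_iff.1 ucH ε hε
    refine ⟨δ, hδ, fun u hu w hw u' hu' w' hw' h1 h2 => ?_⟩
    have := hd (x := (u, w)) (Set.mk_mem_prod hu hw) (y := (u', w'))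
      (Set.mk_mem_prod hu' hw') (by rw [Prod.dist_eq]; exact max_lt h1 h2)
    simpa [Real.dist_eq] using this
  -- continuity of φ
  have φcont : ContinuousOn φ (stdSimplex ℝ A) := by
    rw [Metric.continuousOn_iff]
    intro u hu ε hε
    obtain ⟨δ, hδ, hd⟩ := key (ε / 2) (half_pos hε)
    refine ⟨δ, hδ, fun u' hu' hdist => ?_⟩
    have h1 : φ u' ≤ φ u + ε / 2 := by
      refine φle' _ _ fun w hw => ?_
      have h2 := hd u' hu' w hw u hu w hw hdist (by simpa using hδ)
      have h3 := (abs_lt.1 h2).2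
      linarith [φle u w hw]
    have h2 : φ u ≤ φ u' + ε / 2 := by
      refine φle' _ _ fun w hw => ?_
      have h2 := hd u hu w hw u' hu' w hw (by rwa [dist_comm]) (by simpa using hδ)
      have h3 := (abs_lt.1 h2).2
      linarith [φle u' w hw]
    rw [Real.dist_eq]
    rw [abs_lt]
    constructor <;> linarith
  -- the saddle point
  obtain ⟨us, husA, hus⟩ := cA.exists_isMinOn neA φcont
  obtain ⟨ws, hwsB, hws⟩ := cB.exists_isMaxOn neB (HCu us).continuousOn
  have hφus : φ us = H us ws :=
    le_antisymm (φle' _ _ fun w hw => hws hw) (φle us ws hwsB)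
  -- main inequality : H us ws ≤ H u ws for all u in the simplex
  have main : ∀ u ∈ stdSimplex ℝ A, H us ws ≤ H u ws := by
    intro u hu
    refine le_of_forall_pos_le_add ?_
    intro ε hε
    obtain ⟨δ₀, hδ₀, hd₀⟩ := key ε hε
    set ε₁ := min (μ₂ * δ₀ ^ 2 / 16) ε with hε₁def
    have hε₁ : 0 < ε₁ := lt_min (by positivity) hε
    obtain ⟨δ₁, hδ₁, hd₁⟩ := key ε₁ hε₁
    set t := min 1 (δ₁ / (‖u - us‖ + 1)) with htdef
    have ht0 : 0 < t := lt_min one_pos (by positivity)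
    have ht1 : t ≤ 1 := min_le_left _ _
    set ut := (1 - t) • us + t • u with hutdef
    have hutA : ut ∈ stdSimplex ℝ A :=
      (convex_stdSimplex ℝ A) husA hu (by linarith) (le_of_lt ht0) (by ring)
    have hdistu : dist ut us < δ₁ := by
      rw [dist_eq_norm]
      have hsub : ut - us = t • (u - us) := by
        rw [hutdef]; module
      rw [hsub, norm_smul, Real.norm_eq_abs, abs_of_pos ht0]
      calc t * ‖u - us‖ ≤ (δ₁ / (‖u - us‖ + 1)) * ‖u - us‖ :=
            mul_le_mul_of_nonneg_right (min_le_right _ _) (norm_nonneg _)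
        _ < δ₁ := by
            rw [div_mul_eq_mul_div, div_lt_iff₀ (by positivity)]
            nlinarith [norm_nonneg (u - us), hδ₁]
    obtain ⟨wt, hwtB, hwt⟩ := cB.exists_isMaxOn neB (HCu ut).continuousOn
    have hφut : φ ut = H ut wt :=
      le_antisymm (φle' _ _ fun w hw => hwt hw) (φle ut wt hwtB)
    -- step 1 : φ us ≤ H u wt
    have step1 : φ us ≤ H u wt := by
      have hmin : φ us ≤ φ ut := hus hutA
      have hconv' := (Hconv wt hwtB).2 husA hu
        (by linarith : (0:ℝ) ≤ 1 - t) (le_of_lt ht0) (by ring)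
      simp only [smul_eq_mul] at hconv'
      have h3 : H us wt ≤ φ us := φle us wt hwtB
      have key3 : φ us ≤ (1 - t) * H us wt + t * H u wt := by
        have hq : 0 ≤ (1 - t) * t * (μ₁ / 2 * ‖us - u‖ ^ 2) :=
          mul_nonneg (mul_nonneg (by linarith) ht0.le) (by positivity)
        calc φ us ≤ φ ut := hmin
          _ = H ut wt := hφut
          _ ≤ (1 - t) * H us wt + t * H u wt - (1 - t) * t * (μ₁ / 2 * ‖us - u‖ ^ 2) := hconv'
          _ ≤ (1 - t) * H us wt + t * H u wt := by linarith
      have h4 : (1 - t) * H us wt ≤ (1 - t) * φ us :=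
        mul_le_mul_of_nonneg_left h3 (by linarith)
      nlinarith [key3, h4, ht0]
    -- step 2 : wt is close to ws
    have hHuswt : H us ws - 2 * ε₁ ≤ H us wt := by
      have e1 := hd₁ ut hutA wt hwtB us husA wt hwtB hdistu (by simpa using hδ₁)
      have e2 := hd₁ ut hutA ws hwsB us husA ws hwsB hdistu (by simpa using hδ₁)
      have e3 : H ut ws ≤ H ut wt := hwt hwsB
      have f1 := abs_lt.1 e1
      have f2 := abs_lt.1 e2
      linarith [f1.1, f1.2, f2.1, f2.2]
    have hsq : μ₂ * ‖wt - ws‖ ^ 2 ≤ 4 * (H us ws - H us wt) :=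
      mySqBound (Hconc us husA) hws hwsB hwtB
    have hwdist : dist wt ws < δ₀ := by
      rw [dist_eq_norm]
      have h4 : μ₂ * ‖wt - ws‖ ^ 2 ≤ 8 * ε₁ := by linarith
      have h5 : ε₁ ≤ μ₂ * δ₀ ^ 2 / 16 := min_le_left _ _
      have h6 : μ₂ * ‖wt - ws‖ ^ 2 ≤ μ₂ * (δ₀ ^ 2 / 2) := by linarith
      have h7 : ‖wt - ws‖ ^ 2 ≤ δ₀ ^ 2 / 2 := (mul_le_mul_iff_right₀ hμ₂).1 h6
      nlinarith [h7, hδ₀, norm_nonneg (wt - ws)]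
    have final : H u wt ≤ H u ws + ε := by
      have h6 := hd₀ u hu wt hwtB u hu ws hwsB (by simpa using hδ₀) hwdist
      have h7 := (abs_lt.1 h6).2
      linarith
    calc H us ws = φ us := hφus.symm
      _ ≤ H u wt := step1
      _ ≤ H u ws + ε := final
  -- the saddle point property
  have sprop : ∀ (u : stdSimplex ℝ A) (w : stdSimplex ℝ B),
      H us w.1 ≤ H us ws ∧ H us ws ≤ H u.1 ws :=
    fun u w => ⟨hws w.2, main u.1 u.2⟩
  refine ⟨⟨(⟨us, husA⟩, ⟨ws, hwsB⟩), sprop, ?_⟩, ?_⟩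
  · -- uniqueness
    rintro ⟨⟨u₁, hu₁⟩, ⟨w₁, hw₁⟩⟩ hq
    simp only at hq
    have a1 : H u₁ w₁ ≤ H us w₁ := (hq ⟨us, husA⟩ ⟨w₁, hw₁⟩).2
    have a2 : H us w₁ ≤ H us ws := hws hw₁
    have a3 : H us ws ≤ H u₁ ws := main u₁ hu₁
    have a4 : H u₁ ws ≤ H u₁ w₁ := (hq ⟨u₁, hu₁⟩ ⟨ws, hwsB⟩).1
    have eq1 : H us w₁ = H u₁ w₁ := le_antisymm (by linarith) a1
    have eq2 : H u₁ ws = H u₁ w₁ := le_antisymm a4 (by linarith)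
    have m1 : IsMinOn (fun u => H u w₁) (stdSimplex ℝ A) u₁ :=
      isMinOn_iff.2 fun u hu => (hq ⟨u, hu⟩ ⟨w₁, hw₁⟩).2
    have m2 : IsMinOn (fun u => H u w₁) (stdSimplex ℝ A) us :=
      isMinOn_iff.2 fun u hu => by
        show H us w₁ ≤ H u w₁
        rw [eq1]; exact (hq ⟨u, hu⟩ ⟨w₁, hw₁⟩).2
    have hueq : u₁ = us :=
      ((Hconv w₁ hw₁).strictConvexOn hμ₁).eq_of_isMinOn m1 m2 hu₁ husA
    have M1 : IsMaxOn (fun w => H u₁ w) (stdSimplex ℝ B) w₁ :=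
      isMaxOn_iff.2 fun w hw => (hq ⟨u₁, hu₁⟩ ⟨w, hw⟩).1
    have M2 : IsMaxOn (fun w => H u₁ w) (stdSimplex ℝ B) ws :=
      isMaxOn_iff.2 fun w hw => by
        show H u₁ ws ≥ H u₁ w
        rw [eq2]; exact (hq ⟨u₁, hu₁⟩ ⟨w, hw⟩).1
    have hweq : w₁ = ws :=
      ((Hconc u₁ hu₁).strictConcaveOn hμ₂).eq_of_isMaxOn M1 M2 hw₁ hwsB
    ext i
    · exact congrFun hueq i
    · exact congrFun hweq i
  · -- minimax equalities
    rintro ⟨⟨u₀, hu₀⟩, ⟨w₀, hw₀⟩⟩ hp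
    simp only at hp ⊢
    obtain ⟨pm, hpmS, hpm⟩ := (cA.prod cB).exists_isMinOn (neA.prod neB) HC.continuousOn
    obtain ⟨pM, hpMS, hpM⟩ := (cA.prod cB).exists_isMaxOn (neA.prod neB) HC.continuousOn
    have lower : ∀ u ∈ stdSimplex ℝ A, ∀ w ∈ stdSimplex ℝ B, H pm.1 pm.2 ≤ H u w :=
      fun u hu w hw => hpm (Set.mk_mem_prod hu hw)
    have upper : ∀ u ∈ stdSimplex ℝ A, ∀ w ∈ stdSimplex ℝ B, H u w ≤ H pM.1 pM.2 :=
      fun u hu w hw => hpM (Set.mk_mem_prod hu hw)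
    have bddSup : ∀ u : stdSimplex ℝ A, BddAbove (Set.range fun w : stdSimplex ℝ B => H u.1 w.1) :=
      fun u => ⟨H pM.1 pM.2, by rintro x ⟨w, rfl⟩; exact upper _ u.2 _ w.2⟩
    have bddInf : ∀ w : stdSimplex ℝ B, BddBelow (Set.range fun u : stdSimplex ℝ A => H u.1 w.1) :=
      fun w => ⟨H pm.1 pm.2, by rintro x ⟨u, rfl⟩; exact lower _ u.2 _ w.2⟩
    have bddG : BddBelow (Set.range fun u : stdSimplex ℝ A => ⨆ w : stdSimplex ℝ B, H u.1 w.1) := by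
      refine ⟨H pm.1 pm.2, ?_⟩
      rintro x ⟨u, rfl⟩
      exact le_ciSup_of_le (bddSup u) ⟨w₀, hw₀⟩ (lower _ u.2 _ hw₀)
    have bddF : BddAbove (Set.range fun w : stdSimplex ℝ B => ⨅ u : stdSimplex ℝ A, H u.1 w.1) := by
      refine ⟨H pM.1 pM.2, ?_⟩
      rintro x ⟨w, rfl⟩
      exact ciInf_le_of_le (bddInf w) ⟨u₀, hu₀⟩ (upper _ hu₀ _ w.2)
    constructor
    · refine le_antisymm ?_ ?_
      · refine le_ciInf fun u => ?_
        exact le_ciSup_of_le (bddSup u) ⟨w₀, hw₀⟩ (hp u ⟨w₀, hw₀⟩).2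
      · refine ciInf_le_of_le bddG ⟨u₀, hu₀⟩ ?_
        exact ciSup_le fun w => (hp ⟨u₀, hu₀⟩ w).1
    · refine le_antisymm ?_ ?_
      · refine le_ciSup_of_le bddF ⟨w₀, hw₀⟩ ?_
        exact le_ciInf fun u => (hp u ⟨w₀, hw₀⟩).2
      · refine ciSup_le fun w => ?_
        exact ciInf_le_of_le (bddInf w) ⟨u₀, hu₀⟩ (hp ⟨u₀, hu₀⟩ w).1
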